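/- Let n be a nonzero integer. For every formal power series c over ℂ in the variable X, there exist formal power series a, b over ℂ such that X·(Da) − a + i·n·X·b = c, where D denotes the formal derivative. (Every 2-cochain in a nonzero Fourier mode of the Poisson complex of the formal neighborhood of the necklace is a coboundary: H²_n = 0 for n ≠ 0.) -/

import Mathlib

open PowerSeries

/-- In a nonzero Fourier mode `n` of the Poisson complex of the formal
neighborhood of the necklace, every 2-cochain `c` is a coboundary: there is a
1-cochain `(a, b)` with `X·a′ − a + i n X·b = c`. Hence `H²_n = 0` for `n ≠ 0`. -/
theorem formal_mode_H2_trivial (n : ℤ) (hn : n ≠ 0) (c : PowerSeries ℂ) :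
    ∃ a b : PowerSeries ℂ,
      X * derivative ℂ a - a + C (Complex.I * n) * X * b = c := by
  have h0 : constantCoeff (c - C (constantCoeff c)) = 0 := by simp
  obtain ⟨d, hd⟩ := (X_dvd_iff).2 h0
  have hin : (Complex.I * n) ≠ 0 := by
    simp [Complex.I_ne_zero, hn]
  refine ⟨-C (constantCoeff c), C (Complex.I * n)⁻¹ * d, ?_⟩
  have : C (Complex.I * ↑n) * X * (C (Complex.I * ↑n)⁻¹ * d) = X * d := by
    rw [mul_comm (C (Complex.I * ↑n)) X, mul_assoc, ← mul_assoc (C (Complex.I * ↑n)),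
      ← map_mul, mul_inv_cancel₀ hin, map_one, one_mul]
  rw [this, ← hd]
  simp
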